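/- Let A be a commutative ring, and let Δ_1, ..., Δ_n and an element α of an A-module be such that e_p(Δ_1, ..., Δ_n) α = 0 for all p ≥ 1, where the Δ_i are pairwise commuting module endomorphisms. Fix r with 1 ≤ r ≤ n and set α_i = e_i(Δ_1, ..., Δ̂_r, ..., Δ_n) α. Then Δ_r α_{i-1} = -α_i for all i ≥ 1, and consequently Δ_r^i α = (-1)^i α_i for all i ≥ 0. -/

import Mathlib

open Finset

/-- The `i`-th elementary symmetric polynomial evaluated at a pairwise
commuting family `f` of elements of a (not necessarily commutative)
semiring: the sum over all `i`-element subsets of `s` of the product of the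
corresponding elements. -/
def esymmNC {ι R : Type*} [DecidableEq ι] [Semiring R]
    (s : Finset ι) (i : ℕ) (f : ι → R) (h : ∀ a b, Commute (f a) (f b)) : R :=
  ∑ t ∈ s.powersetCard i, t.noncommProd f (fun a _ b _ _ => h a b)

lemma esymmNC_insert {ι R : Type*} [DecidableEq ι] [Semiring R]
    (s : Finset ι) (x : ι) (hx : x ∉ s) (p : ℕ) (f : ι → R)
    (h : ∀ a b, Commute (f a) (f b)) :
    esymmNC (insert x s) (p + 1) f h
      = esymmNC s (p + 1) f h + f x * esymmNC s p f h := by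
  unfold esymmNC
  rw [powersetCard_succ_insert hx, sum_union, Finset.sum_image, Finset.mul_sum]
  · congr 1
    refine Finset.sum_congr rfl fun t ht => ?_
    have hxt : x ∉ t := fun hxt => hx ((mem_powersetCard.1 ht).1 hxt)
    exact noncommProd_insert_of_notMem _ _ _ _ hxt
  · intro a ha b hb hab
    have hxa : x ∉ a := fun hc => hx ((mem_powersetCard.1 ha).1 hc)
    have hxb : x ∉ b := fun hc => hx ((mem_powersetCard.1 hb).1 hc)
    have := congrArg (Finset.erase · x) hab
    simpa [Finset.erase_insert hxa, Finset.erase_insert hxb] using this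
  · rw [Finset.disjoint_right]
    intro t ht ht'
    obtain ⟨u, hu, rfl⟩ := Finset.mem_image.1 ht
    exact hx ((mem_powersetCard.1 ht').1 (mem_insert_self x u))

/-- let `Δ_1,…,Δ_n` be pairwise commuting endomorphisms of a
module over a commutative ring `A` and `α` an element annihilated by
`e_p(Δ_1,…,Δ_n)` for all `p ≥ 1`.  Fix `r` and set
`α_i = e_i(Δ_1,…,Δ̂_r,…,Δ_n) α`.  Then `Δ_r α_{i-1} = -α_i` for `i ≥ 1`, and
`Δ_r^i α = (-1)^i α_i` for all `i ≥ 0`. -/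
theorem stmt6 {A M : Type*} [CommRing A] [AddCommGroup M] [Module A M]
    (n : ℕ) (Δ : Fin n → Module.End A M) (hcomm : ∀ a b, Commute (Δ a) (Δ b))
    (α : M) (h0 : ∀ p : ℕ, 1 ≤ p → (esymmNC Finset.univ p Δ hcomm) α = 0)
    (r : Fin n) (αf : ℕ → M)
    (hαf : ∀ i : ℕ, αf i = (esymmNC (Finset.univ.erase r) i Δ
      (fun a b => hcomm a b)) α) :
    (∀ i : ℕ, 1 ≤ i → (Δ r) (αf (i - 1)) = -αf i) ∧
    (∀ i : ℕ, ((Δ r) ^ i) α = ((-1 : ℤ) ^ i) • αf i) := by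
  have key : ∀ p : ℕ, (Δ r) (αf p) = -αf (p + 1) := by
    intro p
    have h1 : esymmNC (insert r (Finset.univ.erase r)) (p + 1) Δ hcomm
        = esymmNC (Finset.univ.erase r) (p + 1) Δ (fun a b => hcomm a b)
          + Δ r * esymmNC (Finset.univ.erase r) p Δ (fun a b => hcomm a b) :=
      esymmNC_insert _ r (notMem_erase r _) p Δ hcomm
    rw [Finset.insert_erase (Finset.mem_univ r)] at h1
    have h2 := h0 (p + 1) (Nat.le_add_left 1 p)
    rw [h1] at h2
    simp only [LinearMap.add_apply, Module.End.mul_apply] at h2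
    rw [hαf p, hαf (p + 1)]
    exact eq_neg_of_add_eq_zero_right h2
  refine ⟨fun i hi => ?_, fun i => ?_⟩
  · obtain ⟨p, rfl⟩ := Nat.exists_eq_add_of_le hi
    rw [add_comm]; simpa using key p
  · induction i with
    | zero =>
        simp [hαf 0, esymmNC, Finset.powersetCard_zero]
        exact (LinearMap.congr_fun (Finset.noncommProd_empty Δ _) α).symm
    | succ i ih =>
        rw [pow_succ', Module.End.mul_apply, ih, map_zsmul, key i, pow_succ]
        simp [smul_smul, mul_comm]
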